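/- Let b, d be positive integers with d even, L a finite set, and T' a signature tree of branching b' = b·|L|^(d/2+1) (every node has exactly b' children). For any inner labelling λ of T' by L, there is a subtree T ⊆ T' with branching exactly b such that λ restricted to T is constant per level: for each even level x, all nodes of T at level x receive the same label. -/
import Mathlib


/-- The set of children values of the node of `T` given by the length-`x` prefix of
`s` (signature trees of depth `e` are encoded as sets of tuples `Fin e → ℕ`;
levels of the paper, indexed by even numbers `≤ d = 2e`, correspond to prefix
lengths `x ≤ e`). -/
def childSet {e : ℕ} (T : Set (Fin e → ℕ)) (x : Fin e) (s : Fin e → ℕ) : Set ℕ :=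
  {c | ∃ t ∈ T, (∀ i : Fin e, (i : ℕ) < (x : ℕ) → t i = s i) ∧ t x = c}

/-- The tree `T` has branching exactly `b`: every node has exactly `b` children. -/
def HasBranching {e : ℕ} (T : Set (Fin e → ℕ)) (b : ℕ) : Prop :=
  T.Nonempty ∧ ∀ x : Fin e, ∀ s ∈ T, (childSet T x s).ncard = b

/-- The inner labelling `lab` is constant per level on `T`: any two nodes of `T`
at the same level receive the same label. -/
def ConstPerLevel {e : ℕ} {L : Type} (T : Set (Fin e → ℕ))
    (lab : (x : Fin (e + 1)) → (Fin (x : ℕ) → ℕ) → L) : Prop :=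
  ∀ x : Fin (e + 1), ∀ s ∈ T, ∀ t ∈ T,
    lab x (fun i => s ⟨(i : ℕ), by have h1 := i.isLt; have h2 := x.isLt; omega⟩) =
      lab x (fun i => t ⟨(i : ℕ), by have h1 := i.isLt; have h2 := x.isLt; omega⟩)

def pref {e : ℕ} (x : Fin (e + 1)) (s : Fin e → ℕ) : Fin (x : ℕ) → ℕ :=
  fun i => s ⟨i.1, i.2.trans_le (Nat.lt_succ_iff.mp x.2)⟩

lemma childSet_succ_eq {e : ℕ} (T : Set (Fin (e + 1) → ℕ)) (y : Fin e)
    (s : Fin (e + 1) → ℕ) :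
    childSet T y.succ s = childSet {t | Fin.cons (s 0) t ∈ T} y (Fin.tail s) := by
  ext c
  constructor
  · rintro ⟨t, ht, hpre, hc⟩
    have h0 : t 0 = s 0 := hpre 0 (by simp)
    refine ⟨Fin.tail t, ?_, ?_, ?_⟩
    · show Fin.cons (s 0) (Fin.tail t) ∈ T
      rw [← h0, Fin.cons_self_tail]; exact ht
    · intro i hi
      have := hpre i.succ (by simpa using Nat.succ_lt_succ hi)
      simpa [Fin.tail] using this
    · simpa [Fin.tail] using hc
  · rintro ⟨t', ht', hpre, hc⟩
    refine ⟨Fin.cons (s 0) t', ht', ?_, ?_⟩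
    · intro i hi
      induction i using Fin.cases with
      | zero => simp
      | succ j =>
        have hj : (j : ℕ) < (y : ℕ) := by simpa using hi
        have := hpre j hj
        simpa [Fin.tail] using this
    · simpa using hc

lemma pref_succ {e : ℕ} (y : Fin (e + 1)) (s : Fin (e + 1) → ℕ) :
    pref y.succ s = Fin.cons (s 0) (pref y (Fin.tail s)) := by
  funext i
  induction i using Fin.cases with
  | zero =>
    show s _ = s 0
    exact congrArg s (Fin.ext (by simp))
  | succ j =>
    show s _ = Fin.tail s _
    simp only [Fin.tail, pref]
    exact congrArg s (Fin.ext (by simp))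

theorem key (b : ℕ) (hb : 0 < b) (L : Type) [Fintype L] [Nonempty L] :
    ∀ e (T' : Set (Fin e → ℕ)) (lab : (x : Fin (e + 1)) → (Fin (x : ℕ) → ℕ) → L),
      T'.Nonempty →
      (∀ (x : Fin e), ∀ s ∈ T', b * Fintype.card L ^ (e + 1) ≤ (childSet T' x s).ncard) →
      ∃ (T : Set (Fin e → ℕ)) (f : Fin (e + 1) → L),
        T ⊆ T' ∧ T.Nonempty ∧ (∀ (x : Fin e), ∀ s ∈ T, (childSet T x s).ncard = b) ∧
        ∀ (x : Fin (e + 1)), ∀ s ∈ T, lab x (pref x s) = f x := by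
  intro e
  induction e with
  | zero =>
    intro T' lab hne _
    obtain ⟨s₀, hs₀⟩ := hne
    refine ⟨T', fun x => lab x (pref x s₀), subset_rfl, ⟨s₀, hs₀⟩, fun x => x.elim0, ?_⟩
    intro x s hs
    have hss : s = s₀ := funext fun i => i.elim0
    rw [hss]
  | succ e ih =>
    intro T' lab hne hbr
    classical
    set k := Fintype.card L with hk
    have hk1 : 1 ≤ k := Fintype.card_pos
    obtain ⟨s₀, hs₀⟩ := hne
    set C := childSet T' 0 s₀ with hC
    have hCcard : b * k ^ (e + 2) ≤ C.ncard := hbr 0 s₀ hs₀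
    have hpos : 0 < b * k ^ (e + 2) := by positivity
    have hCfin : C.Finite := by
      by_contra h
      rw [Set.Infinite.ncard h] at hCcard
      omega
    -- membership of C
    have hCmem : ∀ c, c ∈ C ↔ ∃ t ∈ T', t 0 = c := by
      intro c
      constructor
      · rintro ⟨t, ht, -, hc⟩; exact ⟨t, ht, hc⟩
      · rintro ⟨t, ht, hc⟩
        exact ⟨t, ht, fun i hi => absurd hi (by simp), hc⟩
    have H : ∀ c ∈ C, ∃ (Tc : Set (Fin e → ℕ)) (fc : Fin (e + 1) → L),
        Tc ⊆ {t | Fin.cons c t ∈ T'} ∧ Tc.Nonempty ∧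
        (∀ (x : Fin e), ∀ s ∈ Tc, (childSet Tc x s).ncard = b) ∧
        ∀ (x : Fin (e + 1)), ∀ s ∈ Tc, lab x.succ (Fin.cons c (pref x s)) = fc x := by
      intro c hc
      refine ih {t | Fin.cons c t ∈ T'} (fun x p => lab x.succ (Fin.cons c p)) ?_ ?_
      · obtain ⟨t, ht, hc0⟩ := (hCmem c).1 hc
        exact ⟨Fin.tail t, by show Fin.cons c (Fin.tail t) ∈ T'; rw [← hc0, Fin.cons_self_tail]; exact ht⟩
      · intro x s hs
        have heq := childSet_succ_eq T' x (Fin.cons c s)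
        rw [Fin.cons_zero, Fin.tail_cons] at heq
        rw [← heq]
        calc b * k ^ (e + 1) ≤ b * k ^ (e + 2) :=
              Nat.mul_le_mul_left _ (Nat.pow_le_pow_right hk1 (by omega))
          _ ≤ _ := hbr x.succ (Fin.cons c s) hs
    choose! Tsel fsel hsub hnon hbranch hlabel using H
    -- pigeonhole
    have hcardfun : (Finset.univ : Finset (Fin (e + 1) → L)).card = k ^ (e + 1) := by
      simp [hk]
    have hCtf : C.ncard = hCfin.toFinset.card := Set.ncard_eq_toFinset_card C hCfin
    have hmain : (Finset.univ : Finset (Fin (e + 1) → L)).card * (b * k) ≤ hCfin.toFinset.card := by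
      rw [hcardfun, ← hCtf]
      calc k ^ (e + 1) * (b * k) = b * k ^ (e + 2) := by ring
        _ ≤ C.ncard := hCcard
    obtain ⟨fstar, -, hfiber⟩ := Finset.exists_le_card_fiber_of_mul_le_card_of_maps_to
      (s := hCfin.toFinset) (t := (Finset.univ : Finset (Fin (e + 1) → L))) (f := fsel)
      (fun a _ => Finset.mem_univ _) Finset.univ_nonempty hmain
    have hbk : b ≤ b * k := Nat.le_mul_of_pos_right _ hk1
    obtain ⟨S, hSsub, hScard⟩ := Finset.exists_subset_card_eq (le_trans hbk hfiber)
    have hSC : ∀ c ∈ S, c ∈ C ∧ fsel c = fstar := by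
      intro c hc
      have := hSsub hc
      simp only [Finset.mem_filter, Set.Finite.mem_toFinset] at this
      exact this
    set T : Set (Fin (e + 1) → ℕ) := {u | u 0 ∈ S ∧ Fin.tail u ∈ Tsel (u 0)} with hT
    have hmemT : ∀ c ∈ S, ∀ t ∈ Tsel c, Fin.cons c t ∈ T := by
      intro c hc t ht
      constructor
      · rw [Fin.cons_zero]; exact hc
      · rw [Fin.cons_zero, Fin.tail_cons]; exact ht
    refine ⟨T, Fin.cases (lab 0 (fun i => i.elim0)) fstar, ?_, ?_, ?_, ?_⟩
    · intro u hu
      have := hsub (u 0) (hSC _ hu.1).1 hu.2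
      rw [Set.mem_setOf_eq, Fin.cons_self_tail] at this
      exact this
    · have : S.Nonempty := Finset.card_pos.mp (by omega)
      obtain ⟨c, hc⟩ := this
      obtain ⟨t, ht⟩ := hnon c (hSC _ hc).1
      exact ⟨Fin.cons c t, hmemT c hc t ht⟩
    · intro x s hs
      induction x using Fin.cases with
      | zero =>
        have : childSet T 0 s = ↑S := by
          ext c
          constructor
          · rintro ⟨t, ht, -, hc⟩
            rw [← hc]; exact ht.1
          · intro hc
            obtain ⟨t, ht⟩ := hnon c (hSC _ hc).1
            refine ⟨Fin.cons c t, hmemT c hc t ht, fun i hi => absurd hi (by simp), by simp⟩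
        rw [this, Set.ncard_coe_finset, hScard]
      | succ y =>
        rw [childSet_succ_eq T y s]
        have : {t | Fin.cons (s 0) t ∈ T} = Tsel (s 0) := by
          ext t'
          simp only [Set.mem_setOf_eq, hT, Fin.cons_zero, Fin.tail_cons]
          exact ⟨fun h => h.2, fun h => ⟨hs.1, h⟩⟩
        rw [this]
        exact hbranch (s 0) (hSC _ hs.1).1 y (Fin.tail s) hs.2
    · intro x s hs
      induction x using Fin.cases with
      | zero =>
        simp only [Fin.cases_zero]
        congr 1
        funext i
        exact i.elim0
      | succ y =>
        simp only [Fin.cases_succ]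
        rw [pref_succ, ← (hSC _ hs.1).2]
        exact hlabel (s 0) (hSC _ hs.1).1 y (Fin.tail s) hs.2

/-- Finitary extraction lemma: from a signature tree `T'` of branching
`b·|L|^(d/2+1)` (with `d = 2e`) with an inner labelling by the finite set `L`, one
can extract a subtree `T ⊆ T'` of branching exactly `b` on which the labelling is
constant per level. -/
theorem stmt5 (e b : ℕ) (hb : 0 < b) (L : Type) [Fintype L] [Nonempty L]
    (T' : Set (Fin e → ℕ))
    (hT' : HasBranching T' (b * Fintype.card L ^ (e + 1)))
    (lab : (x : Fin (e + 1)) → (Fin (x : ℕ) → ℕ) → L) :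
    ∃ T : Set (Fin e → ℕ), T ⊆ T' ∧ HasBranching T b ∧ ConstPerLevel T lab := by
  obtain ⟨hne, hbr⟩ := hT'
  obtain ⟨T, f, hsub, hne', hbranch, hlab⟩ :=
    key b hb L e T' lab hne (fun x s hs => (hbr x s hs).ge)
  refine ⟨T, hsub, ⟨hne', hbranch⟩, ?_⟩
  intro x s hs t ht
  exact (hlab x s hs).trans (hlab x t ht).symm
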